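/- Let m ≥ 3 and let (D_i)_{i=0}^m be reals with D_0 = ‖C‖_∞, D_{m−1} = 0, D_m > 0, such that for m = 3 the triple (D_0, D_1, D_2) is concave, and for m ≥ 4 the second differences Δ_i^{(2)} := D_{i+1} + D_{i−1} − 2D_i satisfy Δ_i^{(2)} ≤ (m−1−i)Δ_{i+1}^{(2)} ≤ 0 for all i ∈ [m−3]. Define extended marginals r̄_k^{(2)} = [r_k, Σ_{i≠k} ‖r_i‖₁ − (m−1)s] ∈ ℝ^{n+1}_+ and the extended cost tensor C̄^{(2)} ∈ ℝ_+^{(n+1)^m} by C̄^{(2)}_v = C_v for v ∈ T_∅ and C̄^{(2)}_v = D_i for v ∈ T_S with |S| = i ∈ [m]. Then min_{X ∈ Π^s(r_1,…,r_m)} ⟨C, X⟩ = min_{X̄ ∈ Π(r̄_1^{(2)},…,r̄_m^{(2)})} ⟨C̄^{(2)}, X̄⟩. -/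
import Mathlib


open Finset

noncomputable section

namespace MPOT

/-- The `k`-th marginal of a tensor indexed by `[n]^m` (functions `Fin m → Fin n`). -/
def marg {m n : ℕ} (X : (Fin m → Fin n) → ℝ) (k : Fin m) (j : Fin n) : ℝ :=
  ∑ v : Fin m → Fin n, if v k = j then X v else 0

/-- Entrywise (Frobenius) inner product of tensors. -/
def dot {m n : ℕ} (C X : (Fin m → Fin n) → ℝ) : ℝ :=
  ∑ v : Fin m → Fin n, C v * X v

/-- The partial transport polytope `Π^s(r_1, …, r_m)`. -/
def PiPartial {m n : ℕ} (r : Fin m → Fin n → ℝ) (s : ℝ) :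
    Set ((Fin m → Fin n) → ℝ) :=
  {X | (∀ v, 0 ≤ X v) ∧ (∀ k j, marg X k j ≤ r k j) ∧ ∑ v : Fin m → Fin n, X v = s}

/-- The transport polytope `Π(a_1, …, a_m)` with equality marginal constraints. -/
def PiEq {m n : ℕ} (a : Fin m → Fin n → ℝ) : Set ((Fin m → Fin n) → ℝ) :=
  {X | (∀ v, 0 ≤ X v) ∧ ∀ k j, marg X k j = a k j}

/-- Embedding of `[n]^m` into `[n+1]^m`. -/
def emb {m n : ℕ} (v : Fin m → Fin n) : Fin m → Fin (n + 1) :=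
  fun i => (v i).castSucc

/-- Restriction of a tensor on `[n+1]^m` to the indices in `[n]^m`. -/
def restr {m n : ℕ} (X : (Fin m → Fin (n + 1)) → ℝ) : (Fin m → Fin n) → ℝ :=
  fun v => X (emb v)

/-- The number of coordinates of `u` equal to `n+1` (i.e. `Fin.last n`); `u ∈ T_S`
with `|S| = nLast u`. -/
def nLast {m n : ℕ} (u : Fin m → Fin (n + 1)) : ℕ :=
  (univ.filter fun ℓ => u ℓ = Fin.last n).card

/-- Extended cost tensor: the original cost on `T_∅ = [n]^m`, and value `A i` on the
`i`-th layer `∪_{|S| = i} T_S`. -/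
def extCost {m n : ℕ} (C : (Fin m → Fin n) → ℝ) (A : ℕ → ℝ) :
    (Fin m → Fin (n + 1)) → ℝ :=
  fun u =>
    if h : ∀ i, u i ≠ Fin.last n then C fun i => (u i).castPred (h i)
    else A (nLast u)

/-- Total mass of `X` on the sublayer `T_S`. -/
def layerSum {m n : ℕ} (X : (Fin m → Fin (n + 1)) → ℝ) (S : Finset (Fin m)) : ℝ :=
  ∑ u : Fin m → Fin (n + 1), if ∀ ℓ, (u ℓ = Fin.last n ↔ ℓ ∈ S) then X u else 0

/-- First-form extended marginals `r̄_k^{(1)} = [r_k, Σ_r/(m−1) − ‖r_k‖₁ − s/(m−1)]`. -/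
def extMarg1 {m n : ℕ} (r : Fin m → Fin n → ℝ) (s : ℝ) : Fin m → Fin (n + 1) → ℝ :=
  fun k => Fin.snoc (r k)
    ((∑ i, ∑ j, r i j) / ((m : ℝ) - 1) - (∑ j, r k j) - s / ((m : ℝ) - 1))

/-- Second-form extended marginals `r̄_k^{(2)} = [r_k, Σ_{i≠k} ‖r_i‖₁ − (m−1)s]`. -/
def extMarg2 {m n : ℕ} (r : Fin m → Fin n → ℝ) (s : ℝ) : Fin m → Fin (n + 1) → ℝ :=
  fun k => Fin.snoc (r k) ((∑ i ∈ univ.erase k, ∑ j, r i j) - ((m : ℝ) - 1) * s)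

end MPOT

open MPOT


section Aux
variable {m n : ℕ}

lemma marg_nonneg {X : (Fin m → Fin n) → ℝ} (hX : ∀ v, 0 ≤ X v) (k : Fin m) (j : Fin n) :
    0 ≤ marg X k j :=
  Finset.sum_nonneg fun v _ => by split <;> [exact hX v; exact le_rfl]

lemma sum_marg (X : (Fin m → Fin n) → ℝ) (k : Fin m) : ∑ j, marg X k j = ∑ v, X v := by
  unfold marg
  rw [Finset.sum_comm]
  simp

lemma marg_smul (c : ℝ) (X : (Fin m → Fin n) → ℝ) (k : Fin m) (j : Fin n) :
    marg (fun v => c * X v) k j = c * marg X k j := by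
  unfold marg
  rw [Finset.mul_sum]
  exact Finset.sum_congr rfl fun v _ => by split <;> simp

lemma marg_add (X Y : (Fin m → Fin n) → ℝ) (k : Fin m) (j : Fin n) :
    marg (fun v => X v + Y v) k j = marg X k j + marg Y k j := by
  unfold marg
  rw [← Finset.sum_add_distrib]
  exact Finset.sum_congr rfl fun v _ => by split <;> simp

lemma dot_nonneg {C X : (Fin m → Fin n) → ℝ} (hC : ∀ v, 0 ≤ C v) (hX : ∀ v, 0 ≤ X v) :
    0 ≤ dot C X :=
  Finset.sum_nonneg fun v _ => mul_nonneg (hC v) (hX v)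

lemma dot_le_const {C X : (Fin m → Fin n) → ℝ} (B : ℝ) (hC : ∀ v, C v ≤ B)
    (hX : ∀ v, 0 ≤ X v) : dot C X ≤ B * ∑ v, X v := by
  rw [Finset.mul_sum]
  exact Finset.sum_le_sum fun v _ => mul_le_mul_of_nonneg_right (hC v) (hX v)

lemma dot_add (C X Y : (Fin m → Fin n) → ℝ) :
    dot C (fun v => X v + Y v) = dot C X + dot C Y := by
  unfold dot
  rw [← Finset.sum_add_distrib]
  exact Finset.sum_congr rfl fun v _ => by ring

lemma dot_smul (C : (Fin m → Fin n) → ℝ) (c : ℝ) (X : (Fin m → Fin n) → ℝ) :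
    dot C (fun v => c * X v) = c * dot C X := by
  unfold dot
  rw [Finset.mul_sum]
  exact Finset.sum_congr rfl fun v _ => by ring

lemma sum_allne (f : (Fin m → Fin (n + 1)) → ℝ) :
    ∑ u ∈ univ.filter (fun u => ∀ i, u i ≠ Fin.last n), f u
      = ∑ v : Fin m → Fin n, f (emb v) := by
  refine Finset.sum_bij' (fun u hu => fun i => (u i).castPred ?_)
    (fun v _ => emb v) ?_ ?_ ?_ ?_ ?_
  · exact (Finset.mem_filter.mp hu).2 i
  · intro u hu; exact Finset.mem_univ _
  · intro v hv
    simp only [Finset.mem_filter, Finset.mem_univ, true_and]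
    intro i
    exact (Fin.castSucc_lt_last _).ne
  · intro u hu
    funext i
    simp [emb, Fin.castSucc_castPred]
  · intro v hv
    funext i
    simp [emb, Fin.castPred_castSucc]
  · intro u hu
    rfl

/-- Sum of point masses at the images of `c`. -/
def atomSum {ι : Type} [Fintype ι] (c : ι → (Fin m → Fin n)) (g : ι → ℝ) :
    (Fin m → Fin n) → ℝ :=
  fun u => ∑ x, if u = c x then g x else 0

lemma atomSum_nonneg {ι : Type} [Fintype ι] (c : ι → (Fin m → Fin n)) (g : ι → ℝ)
    (hg : ∀ x, 0 ≤ g x) (u : Fin m → Fin n) : 0 ≤ atomSum c g u :=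
  Finset.sum_nonneg fun x _ => by split <;> [exact hg x; exact le_rfl]

lemma atomSum_sum {ι : Type} [Fintype ι] (c : ι → (Fin m → Fin n)) (g : ι → ℝ) :
    ∑ u, atomSum c g u = ∑ x, g x := by
  unfold atomSum
  rw [Finset.sum_comm]
  simp

lemma atomSum_marg {ι : Type} [Fintype ι] (c : ι → (Fin m → Fin n)) (g : ι → ℝ)
    (k : Fin m) (p : Fin n) :
    marg (atomSum c g) k p = ∑ x, if c x k = p then g x else 0 := by
  unfold marg atomSum
  have e1 : ∀ u : Fin m → Fin n,
      (if u k = p then ∑ x, (if u = c x then g x else 0) else 0)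
        = ∑ x, if u = c x ∧ u k = p then g x else 0 := by
    intro u
    by_cases h : u k = p
    · rw [if_pos h]
      exact Finset.sum_congr rfl fun x _ => by simp [h]
    · rw [if_neg h]
      symm
      exact Finset.sum_eq_zero fun x _ => by simp [h]
  rw [Finset.sum_congr rfl (fun u _ => e1 u), Finset.sum_comm]
  refine Finset.sum_congr rfl fun x _ => ?_
  by_cases hc : c x k = p
  · rw [if_pos hc]
    have e2 : ∀ u : Fin m → Fin n, (if u = c x ∧ u k = p then g x else 0)
        = (if u = c x then g x else 0) := by
      intro u
      by_cases hu : u = c x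
      · simp [hu, hc]
      · simp [hu]
    rw [Finset.sum_congr rfl (fun u _ => e2 u)]
    simp
  · rw [if_neg hc]
    refine Finset.sum_eq_zero fun u _ => ?_
    rw [if_neg]
    rintro ⟨rfl, h2⟩
    exact hc h2

lemma atomSum_dot {ι : Type} [Fintype ι] (F : (Fin m → Fin n) → ℝ)
    (c : ι → (Fin m → Fin n)) (g : ι → ℝ) :
    dot F (atomSum c g) = ∑ x, F (c x) * g x := by
  unfold dot atomSum
  have e1 : ∀ u : Fin m → Fin n,
      F u * (∑ x, if u = c x then g x else 0) = ∑ x, (if u = c x then F (c x) * g x else 0) := by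
    intro u
    rw [Finset.mul_sum]
    refine Finset.sum_congr rfl fun x _ => ?_
    by_cases hu : u = c x
    · simp [hu]
    · simp [hu]
  rw [Finset.sum_congr rfl (fun u _ => e1 u), Finset.sum_comm]
  simp

def spikeIdx (k : Fin m) (j : Fin n) : Fin m → Fin (n + 1) :=
  fun i => if i = k then j.castSucc else Fin.last n

lemma extCost_emb (C : (Fin m → Fin n) → ℝ) (D : ℕ → ℝ) (v : Fin m → Fin n) :
    extCost C D (emb v) = C v := by
  unfold extCost
  have hp : ∀ i, emb v i ≠ Fin.last n := fun i => (Fin.castSucc_lt_last _).ne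
  rw [dif_pos hp]
  congr 1

lemma nLast_spikeIdx (k : Fin m) (j : Fin n) : nLast (spikeIdx k j) = m - 1 := by
  unfold nLast spikeIdx
  have e : (univ.filter fun ℓ : Fin m =>
      (if ℓ = k then j.castSucc else Fin.last n) = Fin.last n) = univ.erase k := by
    ext ℓ
    simp only [Finset.mem_filter, Finset.mem_univ, true_and, Finset.mem_erase, and_true]
    by_cases hl : ℓ = k
    · simp [hl, (Fin.castSucc_lt_last j).ne]
    · simp [hl]
  rw [e, Finset.card_erase_of_mem (Finset.mem_univ k)]
  simp

lemma extCost_spikeIdx (hm : 2 ≤ m) (C : (Fin m → Fin n) → ℝ) (D : ℕ → ℝ)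
    (k : Fin m) (j : Fin n) : extCost C D (spikeIdx k j) = D (m - 1) := by
  unfold extCost
  rw [dif_neg, nLast_spikeIdx]
  intro hall
  have h2 : 1 < Fintype.card (Fin m) := by simp; omega
  obtain ⟨i, hi⟩ := Fintype.exists_ne_of_one_lt_card h2 k
  exact hall i (by simp [spikeIdx, hi])

lemma nLast_le (u : Fin m → Fin (n + 1)) : nLast u ≤ m := by
  unfold nLast
  calc _ ≤ (univ : Finset (Fin m)).card := Finset.card_filter_le _ _
    _ = m := by simp

end Aux



lemma prodT_spec {m n : ℕ} (a : Fin m → Fin n → ℝ) (ha : ∀ k j, 0 ≤ a k j) (t : ℝ)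
    (ht0 : 0 ≤ t) (ht : ∀ k, t ≤ ∑ j, a k j) (hpos : ∀ k, 0 < ∑ j, a k j) :
    ∃ Z : (Fin m → Fin n) → ℝ, (∀ v, 0 ≤ Z v) ∧ (∑ v, Z v = t) ∧
      (∀ k q, marg Z k q ≤ a k q) := by
  set S : Fin m → ℝ := fun k => ∑ j, a k j with hS
  refine ⟨fun v => t * ∏ k, a k (v k) / S k, ?_, ?_, ?_⟩
  · intro v
    exact mul_nonneg ht0 (Finset.prod_nonneg fun k _ =>
      div_nonneg (ha k (v k)) (hpos k).le)
  · have key : ∑ v : Fin m → Fin n, ∏ k, a k (v k) / S k = 1 := by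
      have e0 : ∑ v : Fin m → Fin n, ∏ k, a k (v k) / S k = ∏ k, ∑ j, a k j / S k := by
        rw [Finset.prod_univ_sum, Fintype.piFinset_univ]
      rw [e0]
      rw [Finset.prod_congr rfl (fun k (_ : k ∈ univ) => ?_)]
      · exact Finset.prod_const_one
      · rw [← Finset.sum_div, div_self (hpos k).ne']
    simp only [← Finset.mul_sum, key, mul_one]
  · intro k q
    set g : Fin m → Fin n → ℝ := fun i j => if i = k then (if j = q then a i j / S i else 0)
        else a i j / S i with hg
    have key : ∑ v ∈ univ.filter (fun v : Fin m → Fin n => v k = q),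
        ∏ i, a i (v i) / S i = a k q / S k := by
      have h1 : ∀ v : Fin m → Fin n, (if v k = q then ∏ i, a i (v i) / S i else 0)
          = ∏ i, g i (v i) := by
        intro v
        by_cases h : v k = q
        · rw [if_pos h]
          refine Finset.prod_congr rfl fun i _ => ?_
          by_cases hik : i = k
          · subst hik; simp [hg, h]
          · simp [hg, hik]
        · rw [if_neg h]
          symm
          refine Finset.prod_eq_zero (Finset.mem_univ k) ?_
          simp [hg, h]
      have e0 : ∑ v : Fin m → Fin n, ∏ i, g i (v i) = ∏ i, ∑ j, g i j := by
        rw [Finset.prod_univ_sum, Fintype.piFinset_univ]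
      rw [Finset.sum_filter, Finset.sum_congr rfl (fun v _ => h1 v), e0]
      have e2 : ∀ i : Fin m, i ∈ univ → ∑ j, g i j
          = (if i = k then a k q / S k else 1) := by
        intro i _
        by_cases hik : i = k
        · subst hik; simp [hg]
        · simp only [hg, hik, if_false]
          rw [← Finset.sum_div, div_self (hpos i).ne']
      rw [Finset.prod_congr rfl e2, Finset.prod_ite_eq' univ k
        (fun _ => a k q / S k)]
      simp
    unfold marg
    have e1 : ∀ v : Fin m → Fin n, (if v k = q then t * ∏ i, a i (v i) / S i else 0)
        = t * (if v k = q then ∏ i, a i (v i) / S i else 0) := by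
      intro v; split <;> simp
    rw [Finset.sum_congr rfl (fun v _ => e1 v), ← Finset.mul_sum, ← Finset.sum_filter, key]
    have hts : t / S k ≤ 1 := (div_le_one (hpos k)).mpr (ht k)
    calc t * (a k q / S k) = (t / S k) * a k q := by ring
      _ ≤ 1 * a k q := mul_le_mul_of_nonneg_right hts (ha k q)
      _ = a k q := one_mul _



lemma deltaLe {m : ℕ} (D : ℕ → ℝ) (hm : 3 ≤ m)
    (hconc3 : m = 3 → D 2 + D 0 - 2 * D 1 ≤ 0)
    (hconc : 4 ≤ m → ∀ i, 1 ≤ i → i ≤ m - 3 →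
      D (i + 1) + D (i - 1) - 2 * D i
          ≤ ((m - 1 - i : ℕ) : ℝ) * (D (i + 2) + D i - 2 * D (i + 1)) ∧
        ((m - 1 - i : ℕ) : ℝ) * (D (i + 2) + D i - 2 * D (i + 1)) ≤ 0) :
    ∀ i, 1 ≤ i → i ≤ m - 2 → D (i + 1) + D (i - 1) - 2 * D i ≤ 0 := by
  intro i h1 h2
  by_cases hm4 : 4 ≤ m
  · by_cases h3 : i ≤ m - 3
    · obtain ⟨hA, hB⟩ := hconc hm4 i h1 h3
      linarith
    · have hi : i = m - 2 := by omega
      subst hi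
      obtain ⟨_, hB⟩ := hconc hm4 (m - 3) (by omega) le_rfl
      have hcoef : m - 1 - (m - 3) = 2 := by omega
      have e1 : m - 3 + 2 = m - 1 := by omega
      have e2 : m - 3 + 1 = m - 2 := by omega
      rw [hcoef, e1, e2] at hB
      have e3 : m - 2 + 1 = m - 1 := by omega
      have e4 : m - 2 - 1 = m - 3 := by omega
      rw [e3, e4]
      push_cast at hB
      linarith
  · have hm3 : m = 3 := by omega
    have hi : i = 1 := by omega
    subst hi
    simpa using hconc3 hm3

lemma chordReal {m : ℕ} (D : ℕ → ℝ) (hm : 3 ≤ m) (hDm1 : D (m - 1) = 0)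
    (hdelta : ∀ i, 1 ≤ i → i ≤ m - 2 → D (i + 1) + D (i - 1) - 2 * D i ≤ 0) :
    ∀ i : ℕ, i ≤ m - 1 → ((m : ℝ) - 1 - i) * D 0 ≤ ((m : ℝ) - 1) * D i := by
  set L := m - 1 with hL
  have hLcast : ((L : ℕ) : ℝ) = (m : ℝ) - 1 := by
    have : (1 : ℕ) ≤ m := by omega
    push_cast [hL, Nat.cast_sub this]
    ring
  set d : ℕ → ℝ := fun j => D j - D (j + 1) with hd
  have hstep : ∀ j, j + 1 ≤ L - 1 → d j ≤ d (j + 1) := by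
    intro j hj
    have := hdelta (j + 1) (by omega) (by omega)
    simp only [hd]
    simp only [Nat.add_sub_cancel] at this
    linarith
  have hmono : ∀ j i, j ≤ i → i ≤ L - 1 → d j ≤ d i := by
    intro j i hji
    induction i, hji using Nat.le_induction with
    | base => intro _; exact le_rfl
    | succ i hi ih =>
      intro hiL
      exact (ih (by omega)).trans (hstep i (by omega))
  have htelAux : ∀ t i, i + t = L → D i = ∑ j ∈ Finset.Ico i L, d j := by
    intro t
    induction t with
    | zero =>
      intro i hi
      simp only [Nat.add_zero] at hi
      subst hi
      simp [hDm1]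
    | succ t ih =>
      intro i hi
      have hlt : i < L := by omega
      rw [Finset.sum_eq_sum_Ico_succ_bot hlt d, ← ih (i + 1) (by omega)]
      simp [hd]
  have htel : ∀ i, i ≤ L → D i = ∑ j ∈ Finset.Ico i L, d j := by
    intro i hi
    exact htelAux (L - i) i (by omega)
  intro i hi
  rcases eq_or_lt_of_le hi with heq | hlt
  · subst heq
    rw [← hLcast, show D L = 0 from hDm1]
    simp
  · -- i < L
    have hiL1 : i ≤ L - 1 := by omega
    set a := ∑ j ∈ Finset.Ico 0 i, d j with hha
    set b := ∑ j ∈ Finset.Ico i L, d j with hhb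
    have hD0 : D 0 = a + b := by
      rw [htel 0 (by omega), ← Finset.sum_Ico_consecutive d (Nat.zero_le i) hi]
    have hDi : D i = b := htel i hi
    have ha : a ≤ (i : ℝ) * d i := by
      have := Finset.sum_le_card_nsmul (Finset.Ico 0 i) d (d i)
        (fun j hj => hmono j i (by exact (Finset.mem_Ico.mp hj).2.le) hiL1)
      rw [Nat.card_Ico, Nat.sub_zero, nsmul_eq_mul] at this
      exact this
    have hb : ((L : ℝ) - i) * d i ≤ b := by
      have := Finset.card_nsmul_le_sum (Finset.Ico i L) d (d i)
        (fun j hj => hmono i j (Finset.mem_Ico.mp hj).1 (by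
          have := (Finset.mem_Ico.mp hj).2; omega))
      rw [Nat.card_Ico, nsmul_eq_mul] at this
      rw [show ((L : ℝ) - i) = ((L - i : ℕ) : ℝ) from by
        rw [Nat.cast_sub hi]]
      exact this
    rw [← hLcast, hD0, hDi]
    have h1 : (0 : ℝ) ≤ (L : ℝ) - i := by
      have : (i : ℝ) ≤ L := by exact_mod_cast hi
      linarith
    have h2 : (0 : ℝ) ≤ (i : ℝ) := Nat.cast_nonneg i
    nlinarith [mul_le_mul_of_nonneg_left ha h1, mul_le_mul_of_nonneg_left hb h2]

section EasyDir
variable {m n : ℕ}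

set_option maxHeartbeats 2000000 in
lemma easy_dir (hm : 3 ≤ m) (C : (Fin m → Fin n) → ℝ) (D : ℕ → ℝ)
    (hDm1 : D (m - 1) = 0) (r : Fin m → Fin n → ℝ) (s : ℝ)
    (X : (Fin m → Fin n) → ℝ) (hX : X ∈ PiPartial r s) :
    ∃ Y ∈ PiEq (extMarg2 r s), dot (extCost C D) Y = dot C X := by
  obtain ⟨hX0, hXm, hXs⟩ := hX
  set w : Fin m → Fin n → ℝ := fun k j => r k j - marg X k j with hw
  have hw0 : ∀ k j, 0 ≤ w k j := fun k j => sub_nonneg.mpr (hXm k j)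
  have hwsum : ∀ k, ∑ j, w k j = (∑ j, r k j) - s := by
    intro k
    simp only [hw]
    rw [Finset.sum_sub_distrib, sum_marg, hXs]
  set Y : (Fin m → Fin (n + 1)) → ℝ := fun u =>
    atomSum emb X u + atomSum (fun p : Fin m × Fin n => spikeIdx p.1 p.2)
      (fun p : Fin m × Fin n => w p.1 p.2) u with hY
  have hY0 : ∀ u, 0 ≤ Y u := fun u =>
    add_nonneg (atomSum_nonneg _ _ hX0 u) (atomSum_nonneg _ _ (fun p : Fin m × Fin n => hw0 p.1 p.2) u)
  have hmarg : ∀ k p, marg Y k p = extMarg2 r s k p := by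
    intro k p
    rw [show marg Y k p = marg (atomSum emb X) k p
        + marg (atomSum (fun p : Fin m × Fin n => spikeIdx p.1 p.2)
          (fun p : Fin m × Fin n => w p.1 p.2)) k p from marg_add _ _ k p]
    rw [atomSum_marg, atomSum_marg]
    induction p using Fin.lastCases with
    | last =>
      have e1 : ∀ v : Fin m → Fin n, (if emb v k = Fin.last n then X v else 0) = 0 := by
        intro v
        apply if_neg
        show (v k).castSucc ≠ Fin.last n
        exact (Fin.castSucc_lt_last (v k)).ne
      rw [Finset.sum_congr rfl (fun v _ => e1 v), Finset.sum_const_zero, zero_add]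
      rw [Fintype.sum_prod_type]
      have e2 : ∀ k' : Fin m, ∑ j : Fin n,
          (if spikeIdx k' j k = Fin.last n then w k' j else 0)
            = if k' = k then 0 else (∑ j, r k' j) - s := by
        intro k'
        by_cases hk : k = k'
        · subst hk
          simp [spikeIdx, (Fin.castSucc_lt_last _).ne]
        · rw [if_neg (show ¬ k' = k from fun h => hk h.symm)]
          rw [← hwsum k']
          refine Finset.sum_congr rfl fun j _ => ?_
          rw [if_pos (show spikeIdx k' j k = Fin.last n from by
            simp only [spikeIdx]; rw [if_neg hk])]
      rw [Finset.sum_congr rfl (fun k' _ => e2 k')]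
      rw [← Finset.add_sum_erase univ _ (Finset.mem_univ k), if_pos rfl, zero_add]
      have e3 : ∀ k' ∈ univ.erase k, (if k' = k then 0 else (∑ j, r k' j) - s)
          = (∑ j, r k' j) - s := fun k' hk' => if_neg (Finset.mem_erase.mp hk').1
      rw [Finset.sum_congr rfl e3, Finset.sum_sub_distrib, Finset.sum_const,
        Finset.card_erase_of_mem (Finset.mem_univ k), Finset.card_univ, Fintype.card_fin,
        nsmul_eq_mul, Nat.cast_sub (by omega : 1 ≤ m), Nat.cast_one]
      rw [show extMarg2 r s k (Fin.last n)
          = (∑ i ∈ univ.erase k, ∑ j, r i j) - ((m : ℝ) - 1) * s from by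
        unfold extMarg2; rw [Fin.snoc_last]]
    | cast q =>
      have e1 : ∀ v : Fin m → Fin n, (if emb v k = q.castSucc then X v else 0)
          = (if v k = q then X v else 0) := by
        intro v
        simp [emb, Fin.castSucc_inj]
      rw [Finset.sum_congr rfl (fun v _ => e1 v)]
      rw [Fintype.sum_prod_type]
      have e2 : ∀ k' : Fin m, ∑ j : Fin n,
          (if spikeIdx k' j k = q.castSucc then w k' j else 0)
            = if k' = k then w k q else 0 := by
        intro k'
        by_cases hk : k' = k
        · subst hk
          rw [if_pos rfl]
          have : ∀ j : Fin n, (if spikeIdx k' j k' = q.castSucc then w k' j else 0)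
              = if j = q then w k' j else 0 := by
            intro j
            simp [spikeIdx, Fin.castSucc_inj]
          rw [Finset.sum_congr rfl (fun j _ => this j), Finset.sum_ite_eq' univ q]
          simp
        · rw [if_neg hk]
          refine Finset.sum_eq_zero fun j _ => ?_
          rw [if_neg]
          simp only [spikeIdx, if_neg (fun h : k = k' => hk h.symm)]
          exact fun h => absurd h.symm (Fin.castSucc_lt_last q).ne
      rw [Finset.sum_congr rfl (fun k' _ => e2 k'), Finset.sum_ite_eq' univ k]
      simp only [Finset.mem_univ, if_true]
      rw [show extMarg2 r s k q.castSucc = r k q from by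
        unfold extMarg2; rw [Fin.snoc_castSucc]]
      show marg X k q + w k q = r k q
      simp only [hw]
      ring
  refine ⟨Y, ⟨hY0, hmarg⟩, ?_⟩
  rw [show dot (extCost C D) Y = dot (extCost C D) (atomSum emb X)
      + dot (extCost C D) (atomSum (fun p : Fin m × Fin n => spikeIdx p.1 p.2)
        (fun p : Fin m × Fin n => w p.1 p.2)) from dot_add _ _ _]
  rw [atomSum_dot, atomSum_dot]
  have e3 : ∀ v : Fin m → Fin n, extCost C D (emb v) * X v = C v * X v := fun v => by
    rw [extCost_emb]
  have e4 : ∀ p : Fin m × Fin n, extCost C D (spikeIdx p.1 p.2) * w p.1 p.2 = 0 := by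
    intro p
    rw [extCost_spikeIdx (by omega), hDm1, zero_mul]
  rw [Finset.sum_congr rfl (fun v _ => e3 v), Finset.sum_congr rfl (fun p _ => e4 p)]
  simp [dot]

end EasyDir

section HardDir
variable {m n : ℕ}

lemma nLast_eq_zero {u : Fin m → Fin (n + 1)} (h : ∀ i, u i ≠ Fin.last n) :
    nLast u = 0 := by
  unfold nLast
  rw [Finset.card_eq_zero, Finset.filter_eq_empty_iff]
  exact fun i _ => h i

lemma nLast_ge_one {u : Fin m → Fin (n + 1)} (h : ¬ ∀ i, u i ≠ Fin.last n) :
    1 ≤ nLast u := by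
  push_neg at h
  obtain ⟨i, hi⟩ := h
  unfold nLast
  rw [Nat.one_le_iff_ne_zero, ← Nat.pos_iff_ne_zero, Finset.card_pos]
  exact ⟨i, Finset.mem_filter.mpr ⟨Finset.mem_univ i, hi⟩⟩

set_option maxHeartbeats 2000000 in
lemma hard_dir (hm : 3 ≤ m)
    (C : (Fin m → Fin n) → ℝ) (hC : ∀ v, 0 ≤ C v)
    (r : Fin m → Fin n → ℝ) (s : ℝ) (hs0 : 0 ≤ s) (hs : ∀ k, s ≤ ∑ j, r k j)
    (D : ℕ → ℝ) (hD0le : ∀ v, C v ≤ D 0)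
    (hchord : ∀ i, 1 ≤ i → i ≤ m → D 0 * ((m : ℝ) - 1 - i) ≤ ((m : ℝ) - 1) * D i)
    (hDnn : ∀ i, i ≤ m → 0 ≤ D i)
    (Y : (Fin m → Fin (n + 1)) → ℝ) (hY : Y ∈ PiEq (extMarg2 r s)) :
    ∃ X ∈ PiPartial r s, dot C X ≤ dot (extCost C D) Y := by
  obtain ⟨hY0, hYm⟩ := hY
  have hm1 : (0 : ℝ) < (m : ℝ) - 1 := by
    have : (3 : ℝ) ≤ (m : ℝ) := by exact_mod_cast hm
    linarith
  set X₀ : (Fin m → Fin n) → ℝ := restr Y with hX₀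
  have hX₀nn : ∀ v, 0 ≤ X₀ v := fun v => hY0 _
  set L₀ : ℝ := ∑ v, X₀ v with hL₀def
  have hL₀nn : 0 ≤ L₀ := Finset.sum_nonneg fun v _ => hX₀nn v
  have hL₀filter : L₀ = ∑ u ∈ univ.filter (fun u => ∀ i, u i ≠ Fin.last n), Y u :=
    (sum_allne Y).symm
  -- marginal bound for X₀
  have hX₀marg : ∀ k q, marg X₀ k q ≤ r k q := by
    intro k q
    have h1 : marg X₀ k q
        = ∑ u ∈ univ.filter (fun u => ∀ i, u i ≠ Fin.last n),
            (if u k = q.castSucc then Y u else 0) := by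
      rw [sum_allne (fun u => if u k = q.castSucc then Y u else 0)]
      unfold marg
      refine Finset.sum_congr rfl fun v _ => ?_
      have : emb v k = q.castSucc ↔ v k = q := by
        simp [emb, Fin.castSucc_inj]
      by_cases hv : v k = q
      · rw [if_pos hv, if_pos (this.mpr hv)]
        rfl
      · rw [if_neg hv, if_neg (fun h => hv (this.mp h))]
    have h2 : marg Y k q.castSucc = r k q := by
      rw [hYm k q.castSucc]
      unfold extMarg2
      rw [Fin.snoc_castSucc]
    rw [← h2, h1]
    unfold marg
    refine Finset.sum_le_sum_of_subset_of_nonneg (Finset.filter_subset _ _) ?_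
    intro u _ _
    split
    · exact hY0 u
    · exact le_rfl
  -- total mass of Y
  set R : ℝ := ∑ i, ∑ j, r i j with hR
  have hsum_ext : ∀ k : Fin m, ∑ p, extMarg2 r s k p = R - ((m : ℝ) - 1) * s := by
    intro k
    unfold extMarg2
    rw [Fin.sum_univ_castSucc]
    simp only [Fin.snoc_castSucc, Fin.snoc_last]
    have h0 := Finset.add_sum_erase univ (fun i => ∑ j, r i j) (Finset.mem_univ k)
    simp only [hR]
    linarith [h0]
  have hM : ∑ u, Y u = R - ((m : ℝ) - 1) * s := by
    have k0 : Fin m := ⟨0, by omega⟩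
    rw [← sum_marg Y k0]
    rw [Finset.sum_congr rfl (fun p _ => hYm k0 p)]
    exact hsum_ext k0
  -- weighted mass
  have hW : ∑ u, (nLast u : ℝ) * Y u = ((m : ℝ) - 1) * R - (m : ℝ) * ((m : ℝ) - 1) * s := by
    have h1 : ∑ k, marg Y k (Fin.last n) = ∑ u, (nLast u : ℝ) * Y u := by
      unfold marg
      rw [Finset.sum_comm]
      refine Finset.sum_congr rfl fun u _ => ?_
      rw [← Finset.sum_filter, Finset.sum_const, nsmul_eq_mul]
      rfl
    rw [← h1, Finset.sum_congr rfl (fun k _ => hYm k (Fin.last n))]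
    have h2 : ∀ k : Fin m, extMarg2 r s k (Fin.last n)
        = (R - ∑ j, r k j) - ((m : ℝ) - 1) * s := by
      intro k
      unfold extMarg2
      rw [Fin.snoc_last, Finset.sum_erase_eq_sub (Finset.mem_univ k)]
    rw [Finset.sum_congr rfl (fun k _ => h2 k)]
    rw [Finset.sum_sub_distrib, Finset.sum_sub_distrib, Finset.sum_const, Finset.sum_const]
    simp only [Finset.card_univ, Fintype.card_fin, nsmul_eq_mul]
    rw [← hR]
    ring
  -- splitting the extended cost
  set B : ℝ := ∑ u ∈ univ.filter (fun u => ¬ ∀ i, u i ≠ Fin.last n), D (nLast u) * Y u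
    with hB
  have hBnn : 0 ≤ B := by
    refine Finset.sum_nonneg fun u _ => mul_nonneg (hDnn _ (nLast_le u)) (hY0 u)
  have hsplit : dot (extCost C D) Y = dot C X₀ + B := by
    unfold dot
    rw [← Finset.sum_filter_add_sum_filter_not univ (fun u => ∀ i, u i ≠ Fin.last n)
      (fun u => extCost C D u * Y u)]
    congr 1
    · rw [sum_allne (fun u => extCost C D u * Y u)]
      refine Finset.sum_congr rfl fun v _ => ?_
      rw [extCost_emb]
      rfl
    · refine Finset.sum_congr rfl fun u hu => ?_
      have hu' := (Finset.mem_filter.mp hu).2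
      unfold extCost
      rw [dif_neg hu']
  -- the key inequality
  have hkey : D 0 * (s - L₀) ≤ B := by
    have hBw : ((m : ℝ) - 1) * (s - L₀)
        = ∑ u ∈ univ.filter (fun u => ¬ ∀ i, u i ≠ Fin.last n),
            ((m : ℝ) - 1 - (nLast u : ℝ)) * Y u := by
      have e1 : ∑ u, (((m : ℝ) - 1) - (nLast u : ℝ)) * Y u
          = ((m : ℝ) - 1) * (∑ u, Y u) - ∑ u, (nLast u : ℝ) * Y u := by
        rw [Finset.mul_sum, ← Finset.sum_sub_distrib]
        exact Finset.sum_congr rfl fun u _ => by ring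
      have e2 : ∑ u, (((m : ℝ) - 1) - (nLast u : ℝ)) * Y u
          = ((m : ℝ) - 1) * L₀
            + ∑ u ∈ univ.filter (fun u => ¬ ∀ i, u i ≠ Fin.last n),
                ((m : ℝ) - 1 - (nLast u : ℝ)) * Y u := by
        rw [← Finset.sum_filter_add_sum_filter_not univ (fun u => ∀ i, u i ≠ Fin.last n)
          (fun u => (((m : ℝ) - 1) - (nLast u : ℝ)) * Y u)]
        congr 1
        rw [hL₀filter, Finset.mul_sum]
        refine Finset.sum_congr rfl fun u hu => ?_
        rw [nLast_eq_zero (Finset.mem_filter.mp hu).2]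
        norm_num
      have := e1.symm.trans e2
      rw [hM, hW] at this
      linarith
    have hptwise : ∀ u ∈ univ.filter (fun u : Fin m → Fin (n+1) => ¬ ∀ i, u i ≠ Fin.last n),
        D 0 * (((m : ℝ) - 1 - (nLast u : ℝ)) * Y u) ≤ ((m : ℝ) - 1) * (D (nLast u) * Y u) := by
      intro u hu
      have h1 : 1 ≤ nLast u := nLast_ge_one (Finset.mem_filter.mp hu).2
      have h2 := hchord (nLast u) h1 (nLast_le u)
      calc D 0 * (((m : ℝ) - 1 - (nLast u : ℝ)) * Y u)
          = (D 0 * ((m : ℝ) - 1 - (nLast u : ℝ))) * Y u := by ring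
        _ ≤ (((m : ℝ) - 1) * D (nLast u)) * Y u :=
            mul_le_mul_of_nonneg_right h2 (hY0 u)
        _ = ((m : ℝ) - 1) * (D (nLast u) * Y u) := by ring
    have hsum := Finset.sum_le_sum hptwise
    rw [← Finset.mul_sum, ← Finset.mul_sum, ← hBw, ← hB] at hsum
    have : ((m : ℝ) - 1) * (D 0 * (s - L₀)) ≤ ((m : ℝ) - 1) * B := by
      calc ((m : ℝ) - 1) * (D 0 * (s - L₀)) = D 0 * (((m : ℝ) - 1) * (s - L₀)) := by ring
        _ ≤ ((m : ℝ) - 1) * B := hsum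
    exact le_of_mul_le_mul_left this hm1
  -- case analysis
  by_cases hsL : s ≤ L₀
  · by_cases hL0 : L₀ = 0
    · have hs' : s = 0 := le_antisymm (hL0 ▸ hsL) hs0
      refine ⟨fun _ => 0, ⟨fun v => le_rfl, fun k j => ?_, by rw [hs']; simp⟩, ?_⟩
      · have : marg (fun _ : Fin m → Fin n => (0:ℝ)) k j = 0 := by
          unfold marg; simp
        rw [this]
        calc (0:ℝ) ≤ marg X₀ k j := marg_nonneg hX₀nn k j
          _ ≤ r k j := hX₀marg k j
      · rw [hsplit]
        have : dot C (fun _ => (0:ℝ)) = 0 := by unfold dot; simp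
        rw [this]
        exact add_nonneg (dot_nonneg hC hX₀nn) hBnn
    · have hL0pos : 0 < L₀ := lt_of_le_of_ne hL₀nn (Ne.symm hL0)
      have hratio1 : s / L₀ ≤ 1 := (div_le_one hL0pos).mpr hsL
      have hratio0 : 0 ≤ s / L₀ := div_nonneg hs0 hL₀nn
      refine ⟨fun v => (s / L₀) * X₀ v, ⟨fun v => mul_nonneg hratio0 (hX₀nn v),
        fun k j => ?_, ?_⟩, ?_⟩
      · rw [marg_smul]
        calc (s / L₀) * marg X₀ k j ≤ 1 * marg X₀ k j :=
              mul_le_mul_of_nonneg_right hratio1 (marg_nonneg hX₀nn k j)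
          _ = marg X₀ k j := one_mul _
          _ ≤ r k j := hX₀marg k j
      · rw [← Finset.mul_sum, ← hL₀def, div_mul_cancel₀ s hL0]
      · rw [dot_smul, hsplit]
        calc (s / L₀) * dot C X₀ ≤ 1 * dot C X₀ :=
              mul_le_mul_of_nonneg_right hratio1 (dot_nonneg hC hX₀nn)
          _ = dot C X₀ := one_mul _
          _ ≤ dot C X₀ + B := le_add_of_nonneg_right hBnn
  · push_neg at hsL
    set δ : ℝ := s - L₀ with hδ
    have hδpos : 0 < δ := by simp only [hδ]; linarith
    set a : Fin m → Fin n → ℝ := fun k q => r k q - marg X₀ k q with ha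
    have ha0 : ∀ k q, 0 ≤ a k q := fun k q => sub_nonneg.mpr (hX₀marg k q)
    have haS : ∀ k, ∑ q, a k q = (∑ q, r k q) - L₀ := by
      intro k
      simp only [ha]
      rw [Finset.sum_sub_distrib, sum_marg, ← hL₀def]
    have hδS : ∀ k, δ ≤ ∑ q, a k q := by
      intro k
      rw [haS k]
      have := hs k
      simp only [hδ]
      linarith
    have hSpos : ∀ k, 0 < ∑ q, a k q := fun k => lt_of_lt_of_le hδpos (hδS k)
    obtain ⟨Z, hZ0, hZs, hZm⟩ := prodT_spec a ha0 δ hδpos.le hδS hSpos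
    refine ⟨fun v => X₀ v + Z v, ⟨fun v => add_nonneg (hX₀nn v) (hZ0 v),
      fun k q => ?_, ?_⟩, ?_⟩
    · rw [marg_add]
      have := hZm k q
      simp only [ha] at this
      linarith
    · rw [Finset.sum_add_distrib, ← hL₀def, hZs]
      simp only [hδ]
      ring
    · rw [dot_add, hsplit]
      have h1 : dot C Z ≤ D 0 * δ := by
        have := dot_le_const (D 0) hD0le hZ0
        rwa [hZs] at this
      have h2 : D 0 * δ ≤ B := hkey
      linarith

end HardDir



/-- Theorem 3.2, second equivalent form: with a sequence `(D_i)` satisfying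
`D_0 = ‖C‖_∞`, `D_{m−1} = 0`, `D_m > 0`, concavity of `(D_0, D_1, D_2)` when `m = 3`, and
`Δ_i^{(2)} ≤ (m−1−i)Δ_{i+1}^{(2)} ≤ 0` for `i ∈ [m−3]` when `m ≥ 4`, the multimarginal
partial optimal transport problem equals the multimarginal optimal transport problem with
extended marginals `r̄_k^{(2)}` and extended cost `C̄^{(2)}`. -/
theorem mpot_equivalence_second_form {m n : ℕ} (hm : 3 ≤ m) (hn : 1 ≤ n)
    (C : (Fin m → Fin n) → ℝ) (hC : ∀ v, 0 ≤ C v)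
    (r : Fin m → Fin n → ℝ) (hr : ∀ k j, 0 ≤ r k j)
    (s : ℝ) (hs0 : 0 ≤ s) (hs : ∀ k, s ≤ ∑ j, r k j)
    (D : ℕ → ℝ) (hD0 : IsGreatest (Set.range C) (D 0))
    (hDm1 : D (m - 1) = 0) (hDm : 0 < D m)
    (hconc3 : m = 3 → D 2 + D 0 - 2 * D 1 ≤ 0)
    (hconc : 4 ≤ m → ∀ i, 1 ≤ i → i ≤ m - 3 →
      D (i + 1) + D (i - 1) - 2 * D i
          ≤ ((m - 1 - i : ℕ) : ℝ) * (D (i + 2) + D i - 2 * D (i + 1)) ∧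
        ((m - 1 - i : ℕ) : ℝ) * (D (i + 2) + D i - 2 * D (i + 1)) ≤ 0) :
    sInf ((fun X => dot C X) '' PiPartial r s)
      = sInf ((fun Y => dot (extCost C D) Y) '' PiEq (extMarg2 r s)) := by
  have hm1 : (0 : ℝ) < (m : ℝ) - 1 := by
    have : (3 : ℝ) ≤ (m : ℝ) := by exact_mod_cast hm
    linarith
  have hD0nn : 0 ≤ D 0 := by
    obtain ⟨v, hv⟩ := hD0.1
    rw [← hv]
    exact hC v
  have hD0le : ∀ v, C v ≤ D 0 := fun v => hD0.2 ⟨v, rfl⟩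
  have hdelta := deltaLe D hm hconc3 hconc
  have hchordR := chordReal D hm hDm1 hdelta
  have hDnn : ∀ i, i ≤ m → 0 ≤ D i := by
    intro i hi
    by_cases him : i ≤ m - 1
    · have h1 := hchordR i him
      have h2 : (i : ℝ) ≤ (m : ℝ) - 1 := by
        have : ((i : ℕ) : ℝ) ≤ ((m - 1 : ℕ) : ℝ) := by exact_mod_cast him
        rw [Nat.cast_sub (by omega : 1 ≤ m)] at this
        simpa using this
      by_contra h
      push_neg at h
      nlinarith
    · have : i = m := by omega
      subst this
      exact hDm.le
  have hchordF : ∀ i, 1 ≤ i → i ≤ m → D 0 * ((m : ℝ) - 1 - i) ≤ ((m : ℝ) - 1) * D i := by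
    intro i h1 h2
    by_cases him : i ≤ m - 1
    · rw [mul_comm]
      exact hchordR i him
    · have hi' : i = m := by omega
      rw [hi']
      have e : (m : ℝ) - 1 - ((m : ℕ) : ℝ) = -1 := by push_cast; ring
      rw [e]
      nlinarith
  have hCb : ∀ u, 0 ≤ extCost C D u := by
    intro u
    unfold extCost
    by_cases h : ∀ i, u i ≠ Fin.last n
    · rw [dif_pos h]
      exact hC _
    · rw [dif_neg h]
      exact hDnn _ (nLast_le u)
  have hfeas : (PiPartial r s).Nonempty := by
    by_cases hz : s = 0
    · refine ⟨fun _ => 0, fun v => le_rfl, fun k j => ?_, by rw [hz]; simp⟩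
      have h0 : marg (fun _ : Fin m → Fin n => (0:ℝ)) k j = 0 := by unfold marg; simp
      rw [h0]
      exact hr k j
    · have hspos : 0 < s := lt_of_le_of_ne hs0 (Ne.symm hz)
      obtain ⟨Z, h0, hsum, hmarg⟩ :=
        prodT_spec r hr s hs0 hs (fun k => lt_of_lt_of_le hspos (hs k))
      exact ⟨Z, h0, hmarg, hsum⟩
  have hLne : ((fun X => dot C X) '' PiPartial r s).Nonempty := hfeas.image _
  have hRne : ((fun Y => dot (extCost C D) Y) '' PiEq (extMarg2 r s)).Nonempty := by
    obtain ⟨X, hX⟩ := hfeas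
    obtain ⟨Y, hY, _⟩ := easy_dir hm C D hDm1 r s X hX
    exact ⟨_, Y, hY, rfl⟩
  have hLbdd : BddBelow ((fun X => dot C X) '' PiPartial r s) := by
    refine ⟨0, ?_⟩
    rintro x ⟨X, hX, rfl⟩
    exact dot_nonneg hC hX.1
  have hRbdd : BddBelow ((fun Y => dot (extCost C D) Y) '' PiEq (extMarg2 r s)) := by
    refine ⟨0, ?_⟩
    rintro y ⟨Y, hY, rfl⟩
    exact dot_nonneg hCb hY.1
  apply le_antisymm
  · refine le_csInf hRne ?_
    rintro y ⟨Y, hY, rfl⟩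
    obtain ⟨X, hX, hle⟩ := hard_dir hm C hC r s hs0 hs D hD0le hchordF hDnn Y hY
    exact (csInf_le hLbdd ⟨X, hX, rfl⟩).trans hle
  · refine le_csInf hLne ?_
    rintro x ⟨X, hX, rfl⟩
    obtain ⟨Y, hY, heq⟩ := easy_dir hm C D hDm1 r s X hX
    exact le_of_le_of_eq (csInf_le hRbdd ⟨Y, hY, rfl⟩) heq
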